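/- Let n, e, k be nonnegative integers with k(k+1) ≤ e ≤ (k+1)² and n ≥ 2k+2. Set α = (k+1)² − e and β = (k+1) − α. Then the code consisting of n − 2k − 2 zeros followed by any word with α copies of a = 01 and β copies of b = 10 (the final digit of the word being the rightmost digit of the code) encodes a threshold graph on n vertices with exactly e edges. -/

import Mathlib

/-!
Common definitions: threshold graphs from binary codes, counts of matchings and
independent sets, lex and colex graphs, and almost alternating codes.

A binary code is a `List Bool` whose head is the *leftmost* (most significant,
last added) digit; `true` stands for the digit `1` and `false` for `0`.
Reading the code from right to left, each digit adds a vertex: a `1` adds a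
dominating vertex and a `0` adds an isolated vertex.  Equivalently, the vertex
at position `i` (from the left) is adjacent to every vertex to its right iff
its digit is `1`.  Note that the value of the rightmost digit (the star) never
affects the graph.
-/

/-- The threshold graph encoded by a binary code `σ`. -/
def threshOf (σ : List Bool) : SimpleGraph (Fin σ.length) where
  Adj i j := i ≠ j ∧ σ.get (min i j) = true
  symm := by
    constructor
    intro i j h
    refine ⟨h.1.symm, ?_⟩
    rw [min_comm]
    exact h.2
  loopless := by
    constructor
    intro i h
    exact h.1 rfl

/-- The number of edges of a graph. -/
noncomputable def edgeCount {V : Type*} (G : SimpleGraph V) : ℕ := Nat.card G.edgeSet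

/-- `M` is a matching of `G`: a set of pairwise disjoint edges of `G`. -/
def IsMatchingSet {V : Type*} (G : SimpleGraph V) (M : Finset (Sym2 V)) : Prop :=
  (∀ e ∈ M, e ∈ G.edgeSet) ∧ ∀ e ∈ M, ∀ f ∈ M, e ≠ f → ∀ v : V, v ∈ e → v ∉ f

/-- `m(G)`: the total number of matchings of `G` (including the empty matching). -/
noncomputable def matchCount {V : Type*} (G : SimpleGraph V) : ℕ :=
  Nat.card {M : Finset (Sym2 V) // IsMatchingSet G M}

/-- `m_k(G)`: the number of matchings of `G` of size `k`. -/
noncomputable def matchCountK {V : Type*} (G : SimpleGraph V) (k : ℕ) : ℕ :=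
  Nat.card {M : Finset (Sym2 V) // IsMatchingSet G M ∧ M.card = k}

/-- `i(G)`: the number of independent sets of `G` (including the empty set). -/
noncomputable def indCount {V : Type*} (G : SimpleGraph V) : ℕ :=
  Nat.card {S : Finset V // ∀ u ∈ S, ∀ v ∈ S, ¬ G.Adj u v}

/-- `i_k(G)`: the number of independent sets of `G` of size `k`. -/
noncomputable def indCountK {V : Type*} (G : SimpleGraph V) (k : ℕ) : ℕ :=
  Nat.card {S : Finset V // (∀ u ∈ S, ∀ v ∈ S, ¬ G.Adj u v) ∧ S.card = k}

/-- Two codes encode the same threshold graph: they have the same length and agree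
except possibly in the rightmost (starred) digit. -/
def CodeEquiv (σ τ : List Bool) : Prop := σ.length = τ.length ∧ σ.dropLast = τ.dropLast

/-- Words that are concatenations of copies of the letters `a = 01` and `b = 10`. -/
inductive IsABWord : List Bool → Prop
  | nil : IsABWord []
  | a {w : List Bool} : IsABWord w → IsABWord (false :: true :: w)
  | b {w : List Bool} : IsABWord w → IsABWord (true :: false :: w)

/-- `w` is a concatenation of `α` copies of the letter `a = 01` and `β` copies of the
letter `b = 10`, in some order. -/
def IsABWordWith (α β : ℕ) (w : List Bool) : Prop :=
  ∃ ls : List (List Bool), (∀ x ∈ ls, x = [false, true] ∨ x = [true, false]) ∧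
    ls.count [false, true] = α ∧ ls.count [true, false] = β ∧ w = ls.flatten

/-- A code is almost alternating if (possibly after reinterpreting the starred rightmost
digit) it is an initial constant block followed by a word in the letters `a = 01` and
`b = 10`, either using the rightmost digit as the final digit of the last letter
(unstarred case) or keeping the rightmost digit separate after the word (starred case). -/
def IsAlmostAltCode (σ : List Bool) : Prop :=
  ∃ τ : List Bool, CodeEquiv σ τ ∧
    ∃ (t : ℕ) (c : Bool) (w : List Bool), IsABWord w ∧
      (τ = List.replicate t c ++ w ∨ ∃ d : Bool, τ = List.replicate t c ++ w ++ [d])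

/-- A small almost alternating code: the initial block consists of `0`'s (or is empty). -/
def IsSmallAACode (σ : List Bool) : Prop :=
  ∃ τ : List Bool, CodeEquiv σ τ ∧
    ∃ (t : ℕ) (w : List Bool), IsABWord w ∧
      (τ = List.replicate t false ++ w ∨ ∃ d : Bool, τ = List.replicate t false ++ w ++ [d])

/-- A large almost alternating code: the initial block is a nonempty block of `1`'s. -/
def IsLargeAACode (σ : List Bool) : Prop :=
  ∃ τ : List Bool, CodeEquiv σ τ ∧
    ∃ (t : ℕ) (w : List Bool), 1 ≤ t ∧ IsABWord w ∧
      (τ = List.replicate t true ++ w ∨ ∃ d : Bool, τ = List.replicate t true ++ w ++ [d])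

/-- A code has a bracketed string if (possibly after reinterpreting the starred rightmost
digit) it contains a substring `1 0^j 1` or `0 1^j 0` with `j ≥ 3`. -/
def HasBracketedString (σ : List Bool) : Prop :=
  ∃ τ : List Bool, CodeEquiv σ τ ∧ ∃ (x y : List Bool) (j : ℕ), 3 ≤ j ∧
    (τ = x ++ [true] ++ List.replicate j false ++ [true] ++ y ∨
     τ = x ++ [false] ++ List.replicate j true ++ [false] ++ y)

/-- A code has a separation issue if it contains two pairs of repeated digits separated by
a substring of odd length, where the first pair is immediately preceded by the opposite
digit and the second pair is followed by at least one further digit. -/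
def HasSeparationIssue (σ : List Bool) : Prop :=
  ∃ (x m y : List Bool) (d c : Bool),
    Odd m.length ∧ y ≠ [] ∧ σ = x ++ [!d, d, d] ++ m ++ [c, c] ++ y

/-- The colex graph `C(n,e)`: the graph on `Fin n` whose edges are the first `e` pairs in
the colexicographic order.  The pair `{i, j}` with `i < j` has rank `j(j-1)/2 + i` in
this order. -/
def colexGraph (n e : ℕ) : SimpleGraph (Fin n) where
  Adj i j := i ≠ j ∧ max i.val j.val * (max i.val j.val - 1) / 2 + min i.val j.val < e
  symm := by
    constructor
    intro i j h
    refine ⟨h.1.symm, ?_⟩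
    rw [max_comm j.val i.val, min_comm j.val i.val]
    exact h.2
  loopless := by
    constructor
    intro i h
    exact h.1 rfl

/-- The lex graph `L(n,e)`: the graph on `Fin n` whose edges are the first `e` pairs in
the lexicographic order.  The pair `{i, j}` with `i < j` has rank
`i(n-1) - i(i-1)/2 + (j - i - 1)` in this order. -/
def lexGraph (n e : ℕ) : SimpleGraph (Fin n) where
  Adj i j := i ≠ j ∧
    min i.val j.val * (n - 1) - min i.val j.val * (min i.val j.val - 1) / 2
      + (max i.val j.val - min i.val j.val - 1) < e
  symm := by
    constructor
    intro i j h
    refine ⟨h.1.symm, ?_⟩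
    rw [max_comm j.val i.val, min_comm j.val i.val]
    exact h.2
  loopless := by
    constructor
    intro i h
    exact h.1 rfl

/-- Recursive edge weight of a code. -/
def fw : List Bool → ℕ
  | [] => 0
  | c :: s => (if c then s.length else 0) + fw s

lemma edgeCount_eq_sum (σ : List Bool) :
    edgeCount (threshOf σ)
      = ∑ i ∈ Finset.range σ.length, if σ.getD i false = true then σ.length - 1 - i else 0 := by
  classical
  set n := σ.length with hn
  have hE : (threshOf σ).edgeSet ≃ {p : Fin n × Fin n // p.1 < p.2 ∧ σ.get p.1 = true} := by
    refine ⟨fun e => ⟨((e : Sym2 (Fin n)).inf, (e : Sym2 (Fin n)).sup), ?_⟩,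
      fun p => ⟨s(p.1.1, p.1.2), ?_⟩, ?_, ?_⟩
    · obtain ⟨e, he⟩ := e
      induction e using Sym2.ind with
      | _ i j =>
        rw [SimpleGraph.mem_edgeSet] at he
        obtain ⟨hne, hget⟩ := he
        refine ⟨?_, ?_⟩
        · simpa using inf_lt_sup.mpr hne
        · simpa using hget
    · obtain ⟨⟨a, b⟩, hab, hget⟩ := p
      rw [SimpleGraph.mem_edgeSet]
      exact ⟨hab.ne, by simpa [min_eq_left hab.le] using hget⟩
    · rintro ⟨e, he⟩
      apply Subtype.ext
      induction e using Sym2.ind with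
      | _ i j =>
        simp only [Sym2.inf_mk, Sym2.sup_mk]
        rcases le_total i j with h | h
        · simp [min_eq_left h, max_eq_right h]
        · simp [min_eq_right h, max_eq_left h, Sym2.eq_swap]
    · rintro ⟨⟨a, b⟩, hab, hget⟩
      apply Subtype.ext
      simp [min_eq_left hab.le, max_eq_right hab.le]
  rw [edgeCount, Nat.card_congr hE, Nat.card_eq_fintype_card, Fintype.card_subtype]
  rw [Finset.card_eq_sum_card_fiberwise (f := Prod.fst) (t := Finset.univ)
    (fun x _ => Finset.mem_univ _)]
  rw [← Fin.sum_univ_eq_sum_range (fun i => if σ.getD i false = true then n - 1 - i else 0) n]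
  refine Finset.sum_congr rfl fun i _ => ?_
  have hgd : σ.getD i.val false = σ.get i := by
    rw [List.getD_eq_getElem?_getD, List.getElem?_eq_getElem (by exact i.isLt)]
    simp [List.get_eq_getElem]
  rw [hgd]
  by_cases h : σ.get i = true
  · rw [if_pos h, ← Fin.card_Ioi i]
    refine Finset.card_bij (fun p _ => p.2) ?_ ?_ ?_
    · rintro ⟨a, b⟩ hp
      simp only [Finset.mem_filter, Finset.mem_univ, true_and] at hp
      obtain ⟨⟨hlt, -⟩, rfl⟩ := hp
      exact Finset.mem_Ioi.mpr hlt
    · rintro ⟨a, b⟩ ha ⟨c, d⟩ hc hbd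
      simp only [Finset.mem_filter, Finset.mem_univ, true_and] at ha hc
      simp only at hbd
      obtain ⟨-, rfl⟩ := ha
      obtain ⟨-, rfl⟩ := hc
      simp [hbd]
    · intro j hj
      exact ⟨(i, j), Finset.mem_filter.mpr ⟨Finset.mem_filter.mpr ⟨Finset.mem_univ _,
        Finset.mem_Ioi.mp hj, h⟩, rfl⟩, rfl⟩
  · rw [if_neg h, Finset.card_eq_zero, Finset.eq_empty_iff_forall_notMem]
    rintro ⟨a, b⟩ hp
    simp only [Finset.mem_filter, Finset.mem_univ, true_and] at hp
    obtain ⟨⟨-, hg⟩, rfl⟩ := hp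
    exact h hg

lemma range_sum_eq_fw (σ : List Bool) :
    (∑ i ∈ Finset.range σ.length, if σ.getD i false = true then σ.length - 1 - i else 0)
      = fw σ := by
  induction σ with
  | nil => simp [fw]
  | cons c s ih =>
    rw [List.length_cons, Finset.sum_range_succ', fw, ← ih]
    have h0 : (if (c :: s).getD 0 false = true then s.length + 1 - 1 - 0 else 0)
        = if c then s.length else 0 := by simp
    rw [h0, Nat.add_comm]
    congr 1
    refine Finset.sum_congr rfl fun i _ => ?_
    have : (c :: s).getD (i + 1) false = s.getD i false := by simp
    rw [this]
    congr 1
    omega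

lemma fw_replicate_append (t : ℕ) (w : List Bool) :
    fw (List.replicate t false ++ w) = fw w := by
  induction t with
  | zero => simp
  | succ m ih => simpa [List.replicate_succ, fw] using ih

lemma flatten_spec (ls : List (List Bool))
    (h : ∀ x ∈ ls, x = [false, true] ∨ x = [true, false]) :
    ls.flatten.length = 2 * ls.length ∧
    fw ls.flatten = ls.length * (ls.length - 1) + ls.count [true, false] ∧
    ls.count [false, true] + ls.count [true, false] = ls.length := by
  induction ls with
  | nil => simp [fw]
  | cons x ls ih =>
    obtain ⟨hl, hf, hc⟩ := ih (fun y hy => h y (List.mem_cons_of_mem _ hy))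
    have key : (ls.length + 1) * ls.length = ls.length * (ls.length - 1) + 2 * ls.length := by
      cases ls.length with
      | zero => simp
      | succ m => simp only [Nat.succ_sub_one]; ring
    rcases h x List.mem_cons_self with rfl | rfl
    · refine ⟨by simp [hl]; ring, ?_, ?_⟩
      · show fw (false :: true :: ls.flatten) = _
        simp [fw, hf, hl, List.count_cons, Nat.add_sub_cancel]
        omega
      · simp [List.count_cons]
        omega
    · refine ⟨by simp [hl]; ring, ?_, ?_⟩
      · show fw (true :: false :: ls.flatten) = _
        simp [fw, hf, hl, List.count_cons, Nat.add_sub_cancel]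
        omega
      · simp [List.count_cons]
        omega

/-- If `k(k+1) ≤ e ≤ (k+1)²` and `n ≥ 2k+2`, then with
`α = (k+1)² − e` and `β = (k+1) − α`, the code made of `n − 2k − 2` zeros followed by
any word with `α` copies of `a = 01` and `β` copies of `b = 10` (the final digit of the
word being the rightmost digit of the code) encodes a threshold graph on `n` vertices
with exactly `e` edges. -/
theorem unstarred_code_realizes (n e k : ℕ) (h1 : k * (k + 1) ≤ e) (h2 : e ≤ (k + 1) ^ 2)
    (h3 : 2 * k + 2 ≤ n) (w : List Bool)
    (hw : IsABWordWith ((k + 1) ^ 2 - e) ((k + 1) - ((k + 1) ^ 2 - e)) w) :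
    (List.replicate (n - 2 * k - 2) false ++ w).length = n ∧
      edgeCount (threshOf (List.replicate (n - 2 * k - 2) false ++ w)) = e := by
  obtain ⟨ls, hall, hca, hcb, rfl⟩ := hw
  obtain ⟨hl, hf, hc⟩ := flatten_spec ls hall
  have hsq : (k + 1) ^ 2 = k * k + k + k + 1 := by ring
  have hm1 : k * (k + 1) = k * k + k := by ring
  have hm2 : (k + 1) * (k + 1 - 1) = k * k + k := by
    rw [Nat.add_sub_cancel]; ring
  have hlen : ls.length = k + 1 := by omega
  have hwlen : ls.flatten.length = 2 * (k + 1) := by omega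
  constructor
  · simp only [List.length_append, List.length_replicate, hwlen]
    omega
  · rw [edgeCount_eq_sum, range_sum_eq_fw, fw_replicate_append, hf, hlen, hm2]
    omega
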